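/- arXiv:1512.09345 — 9 statements merged into one kernel-verified Lean document; each statement's English description precedes it below -/
import Mathlib

section
/- Two unit quaternions a and b satisfy [a,b] = aba⁻¹b⁻¹ = -1 if and only if Re(a) = 0, Re(b) = 0, and Re(ab) = 0. -/
open Quaternion

/-- Two unit quaternions `a, b` satisfy `[a,b] = a b a⁻¹ b⁻¹ = -1` iff
`Re a = 0`, `Re b = 0` and `Re (a b) = 0`. -/
theorem commutator_eq_neg_one_iff (a b : ℍ[ℝ]) (ha : ‖a‖ = 1) (hb : ‖b‖ = 1) :
    a * b * a⁻¹ * b⁻¹ = -1 ↔ a.re = 0 ∧ b.re = 0 ∧ (a * b).re = 0 := by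
  have ha0 : a ≠ 0 := by intro h; simp [h] at ha
  have hb0 : b ≠ 0 := by intro h; simp [h] at hb
  have hna : a.re ^ 2 + a.imI ^ 2 + a.imJ ^ 2 + a.imK ^ 2 = 1 := by
    have := Quaternion.normSq_eq_norm_mul_self a
    rw [ha, Quaternion.normSq_def'] at this
    linarith
  have hnb : b.re ^ 2 + b.imI ^ 2 + b.imJ ^ 2 + b.imK ^ 2 = 1 := by
    have := Quaternion.normSq_eq_norm_mul_self b
    rw [hb, Quaternion.normSq_def'] at this
    linarith
  rw [mul_inv_eq_iff_eq_mul₀ hb0, mul_inv_eq_iff_eq_mul₀ ha0]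
  constructor
  · intro h
    rw [Quaternion.ext_iff] at h
    obtain ⟨h1, h2, h3, h4⟩ := h
    simp only [Quaternion.re_mul, Quaternion.imI_mul, Quaternion.imJ_mul, Quaternion.imK_mul,
      Quaternion.re_neg, Quaternion.imI_neg, Quaternion.imJ_neg, Quaternion.imK_neg,
      Quaternion.re_one, Quaternion.imI_one, Quaternion.imJ_one, Quaternion.imK_one,
      neg_one_mul] at h1 h2 h3 h4 ⊢
    -- from the four equations derive a.re = 0 and b.re = 0
    have hbre : b.re = 0 := by
      have e : b.re * (a.re ^ 2 + a.imI ^ 2 + a.imJ ^ 2 + a.imK ^ 2) = 0 := by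
        linear_combination (a.re * h1 + a.imI * h2 + a.imJ * h3 + a.imK * h4) / 2
      rw [hna, mul_one] at e
      exact e
    have hare : a.re = 0 := by
      have e : a.re * (b.re ^ 2 + b.imI ^ 2 + b.imJ ^ 2 + b.imK ^ 2) = 0 := by
        linear_combination (b.re * h1 + b.imI * h2 + b.imJ * h3 + b.imK * h4) / 2
      rw [hnb, mul_one] at e
      exact e
    refine ⟨hare, hbre, ?_⟩
    rw [hare, hbre] at h1 ⊢
    linarith
  · rintro ⟨hare, hbre, hab⟩
    rw [Quaternion.re_mul, hare, hbre] at hab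
    ext <;>
      simp only [Quaternion.re_mul, Quaternion.imI_mul, Quaternion.imJ_mul, Quaternion.imK_mul,
        Quaternion.re_neg, Quaternion.imI_neg, Quaternion.imJ_neg, Quaternion.imK_neg,
        Quaternion.re_one, Quaternion.imI_one, Quaternion.imJ_one, Quaternion.imK_one,
        hare, hbre] <;>
      nlinarith [hab]
end

section
/- If p and q are unit quaternions that commute and p = e^{αP} for a purely imaginary unit quaternion P with sin α ≠ 0, then q = e^{βP} for some real β. -/
set_option maxHeartbeats 1000000


open Quaternion

/-- If unit quaternions `p, q` commute and `p = e^{αP} = cos α + sin α • P` for a purely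
imaginary unit quaternion `P` with `sin α ≠ 0`, then `q = e^{βP}` for some real `β`. -/
theorem commuting_with_exp_mem_circle (p q P : ℍ[ℝ]) (α : ℝ)
    (hp : ‖p‖ = 1) (hq : ‖q‖ = 1) (hP : P.re = 0) (hPnorm : ‖P‖ = 1)
    (hcomm : p * q = q * p)
    (hpform : p = (Real.cos α : ℍ[ℝ]) + Real.sin α • P)
    (hsin : Real.sin α ≠ 0) :
    ∃ β : ℝ, q = (Real.cos β : ℍ[ℝ]) + Real.sin β • P := by
  have hPq : P * q = q * P := by
    rw [hpform, add_mul, mul_add, Quaternion.coe_commutes, smul_mul_assoc, mul_smul_comm] at hcomm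
    have h := add_left_cancel hcomm
    exact smul_right_injective _ hsin h
  -- component equations
  have e1 := congrArg QuaternionAlgebra.imI hPq
  have e2 := congrArg QuaternionAlgebra.imJ hPq
  have e3 := congrArg QuaternionAlgebra.imK hPq
  simp only [Quaternion.imI_mul, Quaternion.imJ_mul, Quaternion.imK_mul, hP] at e1 e2 e3
  have hPn : P.imI ^ 2 + P.imJ ^ 2 + P.imK ^ 2 = 1 := by
    have := Quaternion.normSq_eq_norm_mul_self P
    rw [hPnorm, Quaternion.normSq_def'] at this
    nlinarith [this]
  have hqn : q.re ^ 2 + q.imI ^ 2 + q.imJ ^ 2 + q.imK ^ 2 = 1 := by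
    have := Quaternion.normSq_eq_norm_mul_self q
    rw [hq, Quaternion.normSq_def'] at this
    nlinarith [this]
  set t := P.imI * q.imI + P.imJ * q.imJ + P.imK * q.imK with ht
  have hi : q.imI = t * P.imI := by
    rw [ht]; linear_combination P.imK / 2 * e2 - P.imJ / 2 * e3 - q.imI * hPn
  have hj : q.imJ = t * P.imJ := by
    rw [ht]; linear_combination P.imI / 2 * e3 - P.imK / 2 * e1 - q.imJ * hPn
  have hk : q.imK = t * P.imK := by
    rw [ht]; linear_combination P.imJ / 2 * e1 - P.imI / 2 * e2 - q.imK * hPn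
  have hqform : q = (q.re : ℍ[ℝ]) + t • P := by
    ext <;> simp [hP] <;> linarith [hi, hj, hk]
  have hwt : q.re ^ 2 + t ^ 2 = 1 := by
    linear_combination hqn - (q.imI + t * P.imI) * hi - (q.imJ + t * P.imJ) * hj -
      (q.imK + t * P.imK) * hk - t ^ 2 * hPn
  have hw1 : -1 ≤ q.re := by nlinarith
  have hw2 : q.re ≤ 1 := by nlinarith
  by_cases hts : 0 ≤ t
  · refine ⟨Real.arccos q.re, ?_⟩
    have h : Real.sqrt (1 - q.re ^ 2) = t := by
      rw [show 1 - q.re ^ 2 = t ^ 2 by linarith [hwt]]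
      exact Real.sqrt_sq hts
    rw [Real.cos_arccos hw1 hw2, Real.sin_arccos, h]
    exact hqform
  · refine ⟨-Real.arccos q.re, ?_⟩
    have h : Real.sqrt (1 - q.re ^ 2) = -t := by
      rw [show 1 - q.re ^ 2 = (-t) ^ 2 by linarith [hwt]]
      exact Real.sqrt_sq (by linarith [not_le.mp hts])
    rw [Real.cos_neg, Real.sin_neg, Real.cos_arccos hw1 hw2, Real.sin_arccos, h, neg_neg]
    exact hqform
end

section
/- If a', b', c', d' are unit quaternions with Re(i·a') = Re(i·b') = Re(i·c') = Re(i·d') = 0, then Re(i·a'b'c'd') = -Re(i·d'c'b'a'). -/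
open Quaternion

/-- The quaternion unit `i`. -/
def qi : ℍ[ℝ] := ⟨0, 1, 0, 0⟩

/-- If `a', b', c', d'` are unit quaternions with
`Re(i a') = Re(i b') = Re(i c') = Re(i d') = 0`, then `Re(i a'b'c'd') = -Re(i d'c'b'a')`. -/
theorem re_i_mul_prod_antisymm (a b c d : ℍ[ℝ])
    (ha' : ‖a‖ = 1) (hb' : ‖b‖ = 1) (hc' : ‖c‖ = 1) (hd' : ‖d‖ = 1)
    (ha : (qi * a).re = 0) (hb : (qi * b).re = 0)
    (hc : (qi * c).re = 0) (hd : (qi * d).re = 0) :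
    (qi * (a * b * c * d)).re = -(qi * (d * c * b * a)).re := by
  simp only [Quaternion.re_mul, Quaternion.imI_mul, Quaternion.imJ_mul,
    Quaternion.imK_mul] at ha hb hc hd ⊢
  simp only [qi] at ha hb hc hd ⊢
  have ha1 : a.imI = 0 := by linarith
  have hb1 : b.imI = 0 := by linarith
  have hc1 : c.imI = 0 := by linarith
  have hd1 : d.imI = 0 := by linarith
  rw [ha1, hb1, hc1, hd1]
  ring
end

section
/- If a, b, c, d are unit quaternions satisfying abcd = dcba, and x is a purely imaginary unit quaternion with Re(xa) = Re(xb) = Re(xc) = Re(xd) = 0, then Re(x·abcd) = 0. -/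
open Quaternion

lemma star_eq_neg_of_re_zero (p : ℍ[ℝ]) (h : p.re = 0) : star p = -p := by
  ext <;> simp [h]

lemma swap_of_re_zero (x p : ℍ[ℝ]) (hx : star x = -x) (h : (x * p).re = 0) :
    x * p = star p * x := by
  have h1 : star (x * p) = -(x * p) := star_eq_neg_of_re_zero _ h
  have h2 : star (x * p) = -(star p * x) := by rw [star_mul, hx, mul_neg]
  exact neg_injective (h1.symm.trans h2)

/-- If unit quaternions `a, b, c, d` satisfy `abcd = dcba` and `x` is a purely imaginary
unit quaternion with `Re(xa) = Re(xb) = Re(xc) = Re(xd) = 0`, then `Re(x·abcd) = 0`. -/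
theorem re_x_abcd_eq_zero (a b c d x : ℍ[ℝ])
    (ha : ‖a‖ = 1) (hb : ‖b‖ = 1) (hc : ‖c‖ = 1) (hd : ‖d‖ = 1)
    (habcd : a * b * c * d = d * c * b * a)
    (hx : x.re = 0) (hxnorm : ‖x‖ = 1)
    (hxa : (x * a).re = 0) (hxb : (x * b).re = 0)
    (hxc : (x * c).re = 0) (hxd : (x * d).re = 0) :
    (x * (a * b * c * d)).re = 0 := by
  have hx' : star x = -x := star_eq_neg_of_re_zero _ hx
  have sa := swap_of_re_zero x a hx' hxa
  have sb := swap_of_re_zero x b hx' hxb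
  have sc := swap_of_re_zero x c hx' hxc
  have sd := swap_of_re_zero x d hx' hxd
  have key : x * (a * b * c * d) = star (a * b * c * d) * x := by
    calc x * (a * b * c * d) = (x * a) * (b * c * d) := by noncomm_ring
    _ = star a * ((x * b) * (c * d)) := by rw [sa]; noncomm_ring
    _ = star a * (star b * ((x * c) * d)) := by rw [sb]; noncomm_ring
    _ = star a * (star b * (star c * (x * d))) := by rw [sc]; noncomm_ring
    _ = star a * star b * star c * star d * x := by rw [sd]; noncomm_ring
    _ = star (d * c * b * a) * x := by simp only [star_mul]; noncomm_ring
    _ = star (a * b * c * d) * x := by rw [habcd]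
  have h1 : star (x * (a * b * c * d)) = -(x * (a * b * c * d)) := by
    rw [star_mul, hx']
    rw [key]
    noncomm_ring
  have h2 := congrArg QuaternionAlgebra.re h1
  simp only [Quaternion.re_star, Quaternion.re_neg] at h2
  linarith
end

section
/- For any unit quaternions a, b, c, d satisfying abcd = dcba, there exists a unit quaternion x with Re(x) = Re(xa) = Re(xb) = Re(xc) = Re(xd) = Re(x·(abcd)⁻¹) = 0. -/
open Quaternion

noncomputable section

/-- Dot product of imaginary parts. -/
def qdot (p q : ℍ[ℝ]) : ℝ := p.imI*q.imI + p.imJ*q.imJ + p.imK*q.imK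

/-- Constructor for quaternions. -/
def qmk (w x y z : ℝ) : ℍ[ℝ] := ⟨w, x, y, z⟩

@[simp] lemma qmk_re (w x y z : ℝ) : (qmk w x y z).re = w := rfl
@[simp] lemma qmk_imI (w x y z : ℝ) : (qmk w x y z).imI = x := rfl
@[simp] lemma qmk_imJ (w x y z : ℝ) : (qmk w x y z).imJ = y := rfl
@[simp] lemma qmk_imK (w x y z : ℝ) : (qmk w x y z).imK = z := rfl

/-- Cross product of imaginary parts, as an imaginary quaternion. -/
def qcross (p q : ℍ[ℝ]) : ℍ[ℝ] :=
  qmk 0 (p.imJ*q.imK - p.imK*q.imJ) (p.imK*q.imI - p.imI*q.imK) (p.imI*q.imJ - p.imJ*q.imI)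

/-- Determinant of the imaginary parts of three quaternions. -/
def qdet (p q r : ℍ[ℝ]) : ℝ := qdot (qcross p q) r

@[simp] lemma qcross_re (p q : ℍ[ℝ]) : (qcross p q).re = 0 := rfl
@[simp] lemma qcross_imI (p q : ℍ[ℝ]) : (qcross p q).imI = p.imJ*q.imK - p.imK*q.imJ := rfl
@[simp] lemma qcross_imJ (p q : ℍ[ℝ]) : (qcross p q).imJ = p.imK*q.imI - p.imI*q.imK := rfl
@[simp] lemma qcross_imK (p q : ℍ[ℝ]) : (qcross p q).imK = p.imI*q.imJ - p.imJ*q.imI := rfl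

lemma re_mul_comm (p q : ℍ[ℝ]) : (p*q).re = (q*p).re := by
  simp only [Quaternion.re_mul]; ring

lemma re_sub_rev (x y z : ℍ[ℝ]) :
    (x*y*z).re - (z*y*x).re = -2 * qdet x y z := by
  simp only [qdet, qdot, qcross_imI, qcross_imJ, qcross_imK, Quaternion.re_mul,
    Quaternion.imI_mul, Quaternion.imJ_mul, Quaternion.imK_mul]
  ring

lemma re_conj_eq (p q g : ℍ[ℝ]) (hg : g ≠ 0) (h : p * g = g * q) : p.re = q.re := by
  have hp : p = g * q * g⁻¹ := by
    rw [← h, mul_assoc, mul_inv_cancel₀ hg, mul_one]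
  rw [hp, re_mul_comm (g*q) g⁻¹, ← mul_assoc, inv_mul_cancel₀ hg, one_mul]

lemma swap_lemma (x g : ℍ[ℝ]) (hx : x.re = 0) (h : qdot x g = 0) :
    x * g = star g * x := by
  have h' : x.imI*g.imI + x.imJ*g.imJ + x.imK*g.imK = 0 := h
  ext
  · simp only [Quaternion.re_mul, Quaternion.re_star, Quaternion.imI_star,
      Quaternion.imJ_star, Quaternion.imK_star, hx]
    linarith
  · simp only [Quaternion.imI_mul, Quaternion.re_star, Quaternion.imI_star,
      Quaternion.imJ_star, Quaternion.imK_star, hx]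
    ring
  · simp only [Quaternion.imJ_mul, Quaternion.re_star, Quaternion.imI_star,
      Quaternion.imJ_star, Quaternion.imK_star, hx]
    ring
  · simp only [Quaternion.imK_mul, Quaternion.re_star, Quaternion.imI_star,
      Quaternion.imJ_star, Quaternion.imK_star, hx]
    ring

lemma star_eq_neg_of_re {x : ℍ[ℝ]} (hx : x.re = 0) : star x = -x := by
  ext <;> simp [hx]

lemma re_eq_zero_of_star_eq_neg {z : ℍ[ℝ]} (h : star z = -z) : z.re = 0 := by
  have := congrArg QuaternionAlgebra.re h
  simp only [Quaternion.re_star, Quaternion.re_neg] at this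
  linarith

lemma qdot_scale {x w : ℍ[ℝ]} {t : ℝ} (h1 : x.imI = t*w.imI) (h2 : x.imJ = t*w.imJ)
    (h3 : x.imK = t*w.imK) (v : ℍ[ℝ]) : qdot v x = t * qdot v w := by
  simp only [qdot, h1, h2, h3]; ring

lemma norm_one_of_normSq (x : ℍ[ℝ]) (h : normSq x = 1) : ‖x‖ = 1 := by
  have h2 := Quaternion.normSq_eq_norm_mul_self x
  rw [h] at h2
  nlinarith [norm_nonneg x]

lemma qunitize (w : ℍ[ℝ]) (hre : w.re = 0) (hpos : 0 < qdot w w) :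
    ∃ x : ℍ[ℝ], ‖x‖ = 1 ∧ x.re = 0 ∧ ∃ c : ℝ,
      x.imI = c*w.imI ∧ x.imJ = c*w.imJ ∧ x.imK = c*w.imK := by
  have hS : Real.sqrt (qdot w w) > 0 := Real.sqrt_pos.mpr hpos
  set c : ℝ := (Real.sqrt (qdot w w))⁻¹ with hc
  have h2 : Real.sqrt (qdot w w) ^ 2 = qdot w w := Real.sq_sqrt hpos.le
  have hkey : c^2 * qdot w w = 1 := by
    rw [hc, ← h2]
    field_simp
    rw [Real.sqrt_sq hS.le]
  refine ⟨c • w, ?_, ?_, c, ?_, ?_, ?_⟩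
  · apply norm_one_of_normSq
    rw [Quaternion.normSq_def']
    simp only [Quaternion.re_smul, Quaternion.imI_smul, Quaternion.imJ_smul,
      Quaternion.imK_smul, smul_eq_mul, hre]
    have hq : qdot w w = w.imI^2 + w.imJ^2 + w.imK^2 := by simp only [qdot]; ring
    rw [hq] at hkey
    linear_combination hkey
  · simp [Quaternion.re_smul, hre]
  · simp [smul_eq_mul]
  · simp [smul_eq_mul]
  · simp [smul_eq_mul]

lemma qdot_self_pos {w : ℍ[ℝ]} (h : ¬(w.imI = 0 ∧ w.imJ = 0 ∧ w.imK = 0)) :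
    0 < qdot w w := by
  have h1 := sq_nonneg w.imI; have h2 := sq_nonneg w.imJ; have h3 := sq_nonneg w.imK
  rcases not_and_or.mp h with hI | h'
  · have : 0 < w.imI^2 := lt_of_le_of_ne (sq_nonneg _) (Ne.symm (pow_ne_zero 2 hI))
    simp only [qdot]; nlinarith
  · rcases not_and_or.mp h' with hJ | hK
    · have : 0 < w.imJ^2 := lt_of_le_of_ne (sq_nonneg _) (Ne.symm (pow_ne_zero 2 hJ))
      simp only [qdot]; nlinarith
    · have : 0 < w.imK^2 := lt_of_le_of_ne (sq_nonneg _) (Ne.symm (pow_ne_zero 2 hK))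
      simp only [qdot]; nlinarith

lemma qzero_of_comps {z : ℍ[ℝ]} (h0 : z.re = 0) (hI : z.imI = 0) (hJ : z.imJ = 0)
    (hK : z.imK = 0) : z = 0 := by
  ext
  · rw [h0]; rfl
  · rw [hI]; rfl
  · rw [hJ]; rfl
  · rw [hK]; rfl

lemma qcross_eq_zero_iff {u v : ℍ[ℝ]} (h : qcross u v = 0) :
    u.imJ*v.imK - u.imK*v.imJ = 0 ∧ u.imK*v.imI - u.imI*v.imK = 0 ∧
      u.imI*v.imJ - u.imJ*v.imI = 0 := by
  refine ⟨?_, ?_, ?_⟩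
  · simpa using congrArg QuaternionAlgebra.imI h
  · simpa using congrArg QuaternionAlgebra.imJ h
  · simpa using congrArg QuaternionAlgebra.imK h

lemma qcross_flip {u v : ℍ[ℝ]} (h : qcross u v = 0) : qcross v u = 0 := by
  obtain ⟨e1, e2, e3⟩ := qcross_eq_zero_iff h
  ext <;> simp <;> linarith

lemma qcollinear {u v : ℍ[ℝ]} (h : qcross u v = 0)
    (hu : ¬(u.imI = 0 ∧ u.imJ = 0 ∧ u.imK = 0)) :
    ∃ t : ℝ, v.imI = t*u.imI ∧ v.imJ = t*u.imJ ∧ v.imK = t*u.imK := by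
  obtain ⟨e1, e2, e3⟩ := qcross_eq_zero_iff h
  by_cases h1 : u.imI = 0
  · by_cases h2 : u.imJ = 0
    · have h3 : u.imK ≠ 0 := by tauto
      refine ⟨v.imK/u.imK, ?_, ?_, ?_⟩
      · rw [h1, mul_zero]
        have hz : u.imK * v.imI = 0 := by linear_combination e2 + v.imK * h1
        exact (mul_eq_zero.mp hz).resolve_left h3
      · rw [h2, mul_zero]
        have hz : u.imK * v.imJ = 0 := by linear_combination -e1 + v.imK * h2
        exact (mul_eq_zero.mp hz).resolve_left h3
      · field_simp
    · refine ⟨v.imJ/u.imJ, ?_, ?_, ?_⟩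
      · rw [h1, mul_zero]
        have hz : u.imJ * v.imI = 0 := by linear_combination -e3 + v.imJ * h1
        exact (mul_eq_zero.mp hz).resolve_left h2
      · field_simp
      · field_simp
        linear_combination e1
  · refine ⟨v.imI/u.imI, ?_, ?_, ?_⟩
    · field_simp
    · field_simp
      linear_combination e3
    · field_simp
      linear_combination -e2

lemma exists_perp_one (u : ℍ[ℝ]) :
    ∃ x : ℍ[ℝ], ‖x‖ = 1 ∧ x.re = 0 ∧ qdot x u = 0 := by
  by_cases h : u.imI = 0 ∧ u.imJ = 0
  · refine ⟨qmk 0 1 0 0, ?_, rfl, ?_⟩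
    · apply norm_one_of_normSq
      rw [Quaternion.normSq_def']
      show (0:ℝ)^2 + 1^2 + 0^2 + 0^2 = 1
      norm_num
    · show (1:ℝ)*u.imI + 0*u.imJ + 0*u.imK = 0
      rw [h.1]; ring
  · have hw : ¬((qmk 0 (-u.imJ) u.imI 0).imI = 0 ∧ (qmk 0 (-u.imJ) u.imI 0).imJ = 0 ∧
        (qmk 0 (-u.imJ) u.imI 0).imK = 0) := by
      simp only [qmk_imI, qmk_imJ, qmk_imK, neg_eq_zero]
      intro ⟨hJ, hI, _⟩; exact h ⟨hI, hJ⟩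
    obtain ⟨x, hx1, hx2, c, hcI, hcJ, hcK⟩ :=
      qunitize (qmk 0 (-u.imJ) u.imI 0) rfl (qdot_self_pos hw)
    refine ⟨x, hx1, hx2, ?_⟩
    simp only [qdot, hcI, hcJ, hcK, qmk_imI, qmk_imJ, qmk_imK]
    ring

lemma exists_unit_perp2 (u v : ℍ[ℝ]) :
    ∃ x : ℍ[ℝ], ‖x‖ = 1 ∧ x.re = 0 ∧ qdot x u = 0 ∧ qdot x v = 0 := by
  by_cases hu : u.imI = 0 ∧ u.imJ = 0 ∧ u.imK = 0
  · obtain ⟨x, h1, h2, h3⟩ := exists_perp_one v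
    exact ⟨x, h1, h2, by simp [qdot, hu.1, hu.2.1, hu.2.2], h3⟩
  · by_cases hc : qcross u v = 0
    · obtain ⟨x, h1, h2, h3⟩ := exists_perp_one u
      obtain ⟨t, ht1, ht2, ht3⟩ := qcollinear hc hu
      exact ⟨x, h1, h2, h3, by rw [qdot_scale ht1 ht2 ht3, h3, mul_zero]⟩
    · have hne : ¬((qcross u v).imI = 0 ∧ (qcross u v).imJ = 0 ∧ (qcross u v).imK = 0) := by
        intro ⟨hI, hJ, hK⟩
        exact hc (qzero_of_comps (qcross_re u v) hI hJ hK)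
      obtain ⟨x, h1, h2, c, hcI, hcJ, hcK⟩ := qunitize _ (qcross_re u v) (qdot_self_pos hne)
      refine ⟨x, h1, h2, ?_, ?_⟩
      · simp only [qdot, hcI, hcJ, hcK, qcross_imI, qcross_imJ, qcross_imK]; ring
      · simp only [qdot, hcI, hcJ, hcK, qcross_imI, qcross_imJ, qcross_imK]; ring

/-- For unit quaternions `a, b, c, d` with `abcd = dcba`, there is a unit quaternion `x` with
`Re(x) = Re(xa) = Re(xb) = Re(xc) = Re(xd) = Re(x·(abcd)⁻¹) = 0`. -/
theorem exists_traceless_orthogonal (a b c d : ℍ[ℝ])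
    (ha : ‖a‖ = 1) (hb : ‖b‖ = 1) (hc : ‖c‖ = 1) (hd : ‖d‖ = 1)
    (habcd : a * b * c * d = d * c * b * a) :
    ∃ x : ℍ[ℝ], ‖x‖ = 1 ∧ x.re = 0 ∧ (x * a).re = 0 ∧ (x * b).re = 0 ∧
      (x * c).re = 0 ∧ (x * d).re = 0 ∧ (x * (a * b * c * d)⁻¹).re = 0 := by
  have ha0 : a ≠ 0 := by intro h; rw [h] at ha; simp at ha
  have hd0 : d ≠ 0 := by intro h; rw [h] at hd; simp at hd
  -- step 1: qdet a b c = 0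
  have F1 : qdet a b c = 0 := by
    have h : (a*b*c) * d = d * (c*b*a) := by
      rw [habcd]
      noncomm_ring
    have := re_conj_eq (a*b*c) (c*b*a) d hd0 h
    have hr := re_sub_rev a b c
    linarith
  have F2 : qdet b c d = 0 := by
    have h : (d*c*b) * a = a * (b*c*d) := by
      rw [show a*(b*c*d) = a*b*c*d by noncomm_ring, habcd]
    have := re_conj_eq (d*c*b) (b*c*d) a ha0 h
    have hr := re_sub_rev b c d
    linarith
  -- main: find unit imaginary x orthogonal to the imaginary parts of a b c d
  have main : ∃ x : ℍ[ℝ], ‖x‖ = 1 ∧ x.re = 0 ∧ qdot x a = 0 ∧ qdot x b = 0 ∧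
      qdot x c = 0 ∧ qdot x d = 0 := by
    by_cases hbc : qcross b c = 0
    · -- b, c have parallel imaginary parts
      obtain ⟨e1, e2, e3⟩ := qcross_eq_zero_iff hbc
      set m := b * c with hm
      have hbccomm : b * c = c * b := by
        ext
        · simp only [Quaternion.re_mul]; ring
        · simp only [Quaternion.imI_mul]; linarith
        · simp only [Quaternion.imJ_mul]; linarith
        · simp only [Quaternion.imK_mul]; linarith
      have hamd : a * m * d = d * m * a := by
        rw [hm]
        calc a*(b*c)*d = a*b*c*d := by noncomm_ring
        _ = d*c*b*a := habcd
        _ = d*(c*b)*a := by noncomm_ring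
        _ = d*(b*c)*a := by rw [hbccomm]
      have F3 : qdet a m d = 0 := by
        have hr := re_sub_rev a m d
        rw [hamd] at hr
        linarith
      have hmI : m.imI = b.re*c.imI + b.imI*c.re + (b.imJ*c.imK - b.imK*c.imJ) := by
        rw [hm]; simp only [Quaternion.imI_mul]; ring
      have hmJ : m.imJ = b.re*c.imJ + b.imJ*c.re + (b.imK*c.imI - b.imI*c.imK) := by
        rw [hm]; simp only [Quaternion.imJ_mul]; ring
      have hmK : m.imK = b.re*c.imK + b.imK*c.re + (b.imI*c.imJ - b.imJ*c.imI) := by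
        rw [hm]; simp only [Quaternion.imK_mul]; ring
      have hmb : qcross m b = 0 := by
        ext <;> simp only [qcross_re, qcross_imI, qcross_imJ, qcross_imK, hmI, hmJ, hmK,
          Quaternion.re_zero, Quaternion.imI_zero, Quaternion.imJ_zero, Quaternion.imK_zero]
        · linear_combination (-b.re)*e1 + b.imK*e2 - b.imJ*e3
        · linear_combination (-b.re)*e2 + b.imI*e3 - b.imK*e1
        · linear_combination (-b.re)*e3 + b.imJ*e1 - b.imI*e2
      have hmc : qcross m c = 0 := by
        ext <;> simp only [qcross_re, qcross_imI, qcross_imJ, qcross_imK, hmI, hmJ, hmK,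
          Quaternion.re_zero, Quaternion.imI_zero, Quaternion.imJ_zero, Quaternion.imK_zero]
        · linear_combination c.re*e1 + c.imK*e2 - c.imJ*e3
        · linear_combination c.re*e2 + c.imI*e3 - c.imK*e1
        · linear_combination c.re*e3 + c.imJ*e1 - c.imI*e2
      by_cases hm0 : m.imI = 0 ∧ m.imJ = 0 ∧ m.imK = 0
      · -- m = b*c is real, so a and d commute
        have hmns : normSq m = 1 := by
          rw [hm, map_mul]
          rw [Quaternion.normSq_eq_norm_mul_self, Quaternion.normSq_eq_norm_mul_self, hb, hc]
          ring
        have hmre : m.re ≠ 0 := by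
          rw [Quaternion.normSq_def', hm0.1, hm0.2.1, hm0.2.2] at hmns
          intro h; rw [h] at hmns; norm_num at hmns
        have hmcoe : m = ((m.re : ℝ) : ℍ[ℝ]) := by
          ext <;> simp [hm0.1, hm0.2.1, hm0.2.2]
        have had : a * d = d * a := by
          have l1 : a*((m.re : ℝ) : ℍ[ℝ])*d = ((m.re : ℝ) : ℍ[ℝ])*(a*d) := by
            rw [← Quaternion.coe_commutes, mul_assoc]
          have l2 : d*((m.re : ℝ) : ℍ[ℝ])*a = ((m.re : ℝ) : ℍ[ℝ])*(d*a) := by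
            rw [← Quaternion.coe_commutes, mul_assoc]
          have h' : ((m.re : ℝ) : ℍ[ℝ])*(a*d) = ((m.re : ℝ) : ℍ[ℝ])*(d*a) := by
            rw [← l1, ← l2, ← hmcoe]; exact hamd
          have hne : ((m.re : ℝ) : ℍ[ℝ]) ≠ 0 := by
            intro hco
            exact hmre (Quaternion.coe_injective (by simpa using hco))
          exact mul_left_cancel₀ hne h'
        have hcad : qcross a d = 0 := by
          have hI := congrArg QuaternionAlgebra.imI had
          have hJ := congrArg QuaternionAlgebra.imJ had
          have hK := congrArg QuaternionAlgebra.imK had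
          simp only [Quaternion.imI_mul, Quaternion.imJ_mul, Quaternion.imK_mul] at hI hJ hK
          ext <;> simp only [qcross_re, qcross_imI, qcross_imJ, qcross_imK,
            Quaternion.re_zero, Quaternion.imI_zero, Quaternion.imJ_zero, Quaternion.imK_zero]
          · linarith
          · linarith
          · linarith
        by_cases hb0 : b.imI = 0 ∧ b.imJ = 0 ∧ b.imK = 0
        · -- b real hence c real
          have hbre : b.re ≠ 0 := by
            have : normSq b = 1 := by
              rw [Quaternion.normSq_eq_norm_mul_self, hb]; ring
            rw [Quaternion.normSq_def', hb0.1, hb0.2.1, hb0.2.2] at this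
            intro h; rw [h] at this; norm_num at this
          have hc0 : c.imI = 0 ∧ c.imJ = 0 ∧ c.imK = 0 := by
            have hI : b.re * c.imI = 0 := by
              have := hm0.1; rw [hmI, hb0.1, hb0.2.1, hb0.2.2] at this; linarith
            have hJ : b.re * c.imJ = 0 := by
              have := hm0.2.1; rw [hmJ, hb0.1, hb0.2.1, hb0.2.2] at this; linarith
            have hK : b.re * c.imK = 0 := by
              have := hm0.2.2; rw [hmK, hb0.1, hb0.2.1, hb0.2.2] at this; linarith
            exact ⟨(mul_eq_zero.mp hI).resolve_left hbre,
              (mul_eq_zero.mp hJ).resolve_left hbre,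
              (mul_eq_zero.mp hK).resolve_left hbre⟩
          obtain ⟨x, h1, h2, h3, h4⟩ := exists_unit_perp2 a d
          exact ⟨x, h1, h2, h3, by simp [qdot, hb0.1, hb0.2.1, hb0.2.2],
            by simp [qdot, hc0.1, hc0.2.1, hc0.2.2], h4⟩
        · by_cases ha0' : a.imI = 0 ∧ a.imJ = 0 ∧ a.imK = 0
          · obtain ⟨x, h1, h2, h3, h4⟩ := exists_unit_perp2 d b
            obtain ⟨t, ht1, ht2, ht3⟩ := qcollinear hbc hb0
            exact ⟨x, h1, h2, by simp [qdot, ha0'.1, ha0'.2.1, ha0'.2.2], h4,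
              by rw [qdot_scale ht1 ht2 ht3, h4, mul_zero], h3⟩
          · obtain ⟨x, h1, h2, h3, h4⟩ := exists_unit_perp2 a b
            obtain ⟨t, ht1, ht2, ht3⟩ := qcollinear hbc hb0
            obtain ⟨s, hs1, hs2, hs3⟩ := qcollinear hcad ha0'
            exact ⟨x, h1, h2, h3, h4,
              by rw [qdot_scale ht1 ht2 ht3, h4, mul_zero],
              by rw [qdot_scale hs1 hs2 hs3, h3, mul_zero]⟩
      · -- Im m ≠ 0
        by_cases ham : qcross a m = 0
        · by_cases hdm : qcross d m = 0
          · -- everything collinear with m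
            obtain ⟨x, h1, h2, h3⟩ := exists_perp_one m
            obtain ⟨ta, hta1, hta2, hta3⟩ := qcollinear (qcross_flip ham) hm0
            obtain ⟨tb, htb1, htb2, htb3⟩ := qcollinear hmb hm0
            obtain ⟨tc, htc1, htc2, htc3⟩ := qcollinear hmc hm0
            obtain ⟨td, htd1, htd2, htd3⟩ := qcollinear (qcross_flip hdm) hm0
            exact ⟨x, h1, h2,
              by rw [qdot_scale hta1 hta2 hta3, h3, mul_zero],
              by rw [qdot_scale htb1 htb2 htb3, h3, mul_zero],
              by rw [qdot_scale htc1 htc2 htc3, h3, mul_zero],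
              by rw [qdot_scale htd1 htd2 htd3, h3, mul_zero]⟩
          · -- use d × m
            have hne : ¬((qcross d m).imI = 0 ∧ (qcross d m).imJ = 0 ∧ (qcross d m).imK = 0) := by
              intro ⟨hI, hJ, hK⟩; exact hdm (qzero_of_comps (qcross_re d m) hI hJ hK)
            obtain ⟨x, h1, h2, cc, hcI, hcJ, hcK⟩ :=
              qunitize _ (qcross_re d m) (qdot_self_pos hne)
            obtain ⟨ta, hta1, hta2, hta3⟩ := qcollinear (qcross_flip ham) hm0
            obtain ⟨tb, htb1, htb2, htb3⟩ := qcollinear hmb hm0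
            obtain ⟨tc, htc1, htc2, htc3⟩ := qcollinear hmc hm0
            refine ⟨x, h1, h2, ?_, ?_, ?_, ?_⟩
            · simp only [qdot, hcI, hcJ, hcK, qcross_imI, qcross_imJ, qcross_imK,
                hta1, hta2, hta3]; ring
            · simp only [qdot, hcI, hcJ, hcK, qcross_imI, qcross_imJ, qcross_imK,
                htb1, htb2, htb3]; ring
            · simp only [qdot, hcI, hcJ, hcK, qcross_imI, qcross_imJ, qcross_imK,
                htc1, htc2, htc3]; ring
            · simp only [qdot, hcI, hcJ, hcK, qcross_imI, qcross_imJ, qcross_imK]; ring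
        · -- use a × m
          have hne : ¬((qcross a m).imI = 0 ∧ (qcross a m).imJ = 0 ∧ (qcross a m).imK = 0) := by
            intro ⟨hI, hJ, hK⟩; exact ham (qzero_of_comps (qcross_re a m) hI hJ hK)
          obtain ⟨x, h1, h2, cc, hcI, hcJ, hcK⟩ :=
            qunitize _ (qcross_re a m) (qdot_self_pos hne)
          obtain ⟨tb, htb1, htb2, htb3⟩ := qcollinear hmb hm0
          obtain ⟨tc, htc1, htc2, htc3⟩ := qcollinear hmc hm0
          refine ⟨x, h1, h2, ?_, ?_, ?_, ?_⟩
          · simp only [qdot, hcI, hcJ, hcK, qcross_imI, qcross_imJ, qcross_imK]; ring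
          · simp only [qdot, hcI, hcJ, hcK, qcross_imI, qcross_imJ, qcross_imK,
              htb1, htb2, htb3]; ring
          · simp only [qdot, hcI, hcJ, hcK, qcross_imI, qcross_imJ, qcross_imK,
              htc1, htc2, htc3]; ring
          · -- uses qdet a m d = 0
            simp only [qdet, qdot, qcross_imI, qcross_imJ, qcross_imK] at F3
            simp only [qdot, hcI, hcJ, hcK, qcross_imI, qcross_imJ, qcross_imK]
            linear_combination cc * F3
    · -- b × c ≠ 0 : use it
      have hne : ¬((qcross b c).imI = 0 ∧ (qcross b c).imJ = 0 ∧ (qcross b c).imK = 0) := by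
        intro ⟨hI, hJ, hK⟩; exact hbc (qzero_of_comps (qcross_re b c) hI hJ hK)
      obtain ⟨x, h1, h2, cc, hcI, hcJ, hcK⟩ := qunitize _ (qcross_re b c) (qdot_self_pos hne)
      refine ⟨x, h1, h2, ?_, ?_, ?_, ?_⟩
      · simp only [qdet, qdot, qcross_imI, qcross_imJ, qcross_imK] at F1
        simp only [qdot, hcI, hcJ, hcK, qcross_imI, qcross_imJ, qcross_imK]
        linear_combination cc * F1
      · simp only [qdot, hcI, hcJ, hcK, qcross_imI, qcross_imJ, qcross_imK]; ring
      · simp only [qdot, hcI, hcJ, hcK, qcross_imI, qcross_imJ, qcross_imK]; ring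
      · simp only [qdet, qdot, qcross_imI, qcross_imJ, qcross_imK] at F2
        simp only [qdot, hcI, hcJ, hcK, qcross_imI, qcross_imJ, qcross_imK]
        linear_combination cc * F2
  -- conclude
  obtain ⟨x, hx1, hx2, hda, hdb, hdc, hdd⟩ := main
  have hs : star x = -x := star_eq_neg_of_re hx2
  have sa : x * a = star a * x := swap_lemma x a hx2 hda
  have sb : x * b = star b * x := swap_lemma x b hx2 hdb
  have sc : x * c = star c * x := swap_lemma x c hx2 hdc
  have sd : x * d = star d * x := swap_lemma x d hx2 hdd
  have key : ∀ g : ℍ[ℝ], x * g = star g * x → (x * g).re = 0 := by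
    intro g hg
    apply re_eq_zero_of_star_eq_neg
    rw [star_mul, hs, hg]
    noncomm_ring
  set w := a * b * c * d with hw
  have hxw : x * w = star w * x := by
    have h1 : x * w = star a * star b * star c * star d * x := by
      calc x*w = ((x*a)*b*c)*d := by rw [hw]; noncomm_ring
      _ = ((star a*x)*b*c)*d := by rw [sa]
      _ = ((star a*(x*b))*c)*d := by noncomm_ring
      _ = ((star a*(star b*x))*c)*d := by rw [sb]
      _ = (star a*star b*(x*c))*d := by noncomm_ring
      _ = (star a*star b*(star c*x))*d := by rw [sc]
      _ = star a*star b*star c*(x*d) := by noncomm_ring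
      _ = star a*star b*star c*(star d*x) := by rw [sd]
      _ = star a * star b * star c * star d * x := by noncomm_ring
    have h2 : star a * star b * star c * star d = star (d*c*b*a) := by
      simp only [star_mul]; noncomm_ring
    rw [h1, h2, ← habcd]
  have hwre : (x * w).re = 0 := key w hxw
  have hwnorm : ‖w‖ = 1 := by
    rw [hw, norm_mul, norm_mul, norm_mul, ha, hb, hc, hd]; norm_num
  have hwinv : w⁻¹ = star w := by
    have hws : w * star w = 1 := by
      have := Quaternion.self_mul_star w
      rw [this, Quaternion.normSq_eq_norm_mul_self, hwnorm]
      norm_num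
    exact inv_eq_of_mul_eq_one_right hws
  refine ⟨x, hx1, hx2, key a sa, key b sb, key c sc, key d sd, ?_⟩
  rw [show (a*b*c*d)⁻¹ = w⁻¹ from rfl, hwinv]
  have hstarw : star w = ((2 * w.re : ℝ) : ℍ[ℝ]) - w := by
    rw [← Quaternion.self_add_star' w]; abel
  rw [hstarw, mul_sub, Quaternion.re_sub, Quaternion.mul_coe_eq_smul]
  rw [Quaternion.re_smul, hx2, hwre]
  simp

end
end

section
/- If four unit quaternions a, b, c, d pairwise commute, then there exists a purely imaginary unit quaternion x with Re(xa) = Re(xb) = Re(xc) = Re(xd) = 0. -/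
open Quaternion

/-- Orthogonality from cross-product vanishing. -/
lemma perp_of_cross (p q r wp wq wr x1 x2 x3 : ℝ)
    (hv : ¬(p = 0 ∧ q = 0 ∧ r = 0))
    (hx : p * x1 + q * x2 + r * x3 = 0)
    (h1 : q * wr - r * wq = 0) (h2 : r * wp - p * wr = 0) (h3 : p * wq - q * wp = 0) :
    x1 * wp + x2 * wq + x3 * wr = 0 := by
  by_cases hp : p = 0
  · by_cases hq : q = 0
    · have hr : r ≠ 0 := by
        intro hr; exact hv ⟨hp, hq, hr⟩
      have : r * (x1 * wp + x2 * wq + x3 * wr) = 0 := by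
        linear_combination wr * hx + x1 * h2 - x2 * h1
      exact (mul_eq_zero.mp this).resolve_left hr
    · have : q * (x1 * wp + x2 * wq + x3 * wr) = 0 := by
        linear_combination wq * hx - x1 * h3 + x3 * h1
      exact (mul_eq_zero.mp this).resolve_left hq
  · have : p * (x1 * wp + x2 * wq + x3 * wr) = 0 := by
      linear_combination wp * hx + x2 * h3 - x3 * h2
    exact (mul_eq_zero.mp this).resolve_left hp

/-- Existence of a unit vector orthogonal to a given vector in `ℝ³`. -/
lemma exists_perp_unit (p q r : ℝ) :
    ∃ x1 x2 x3 : ℝ, x1 ^ 2 + x2 ^ 2 + x3 ^ 2 = 1 ∧ p * x1 + q * x2 + r * x3 = 0 := by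
  by_cases h : p = 0 ∧ q = 0
  · exact ⟨1, 0, 0, by ring, by rw [h.1, h.2]; ring⟩
  · have hs : (0 : ℝ) < p ^ 2 + q ^ 2 := by
      rcases not_and_or.mp h with hp | hq
      · positivity
      · positivity
    set s := Real.sqrt (p ^ 2 + q ^ 2) with hs_def
    have hs0 : 0 < s := Real.sqrt_pos.mpr hs
    have hss : s ^ 2 = p ^ 2 + q ^ 2 := Real.sq_sqrt hs.le
    refine ⟨q / s, -p / s, 0, ?_, by field_simp; ring⟩
    field_simp
    linarith [hss]

lemma cross_of_comm (a b : ℍ[ℝ]) (h : a * b = b * a) :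
    a.imJ * b.imK - a.imK * b.imJ = 0 ∧ a.imK * b.imI - a.imI * b.imK = 0 ∧
      a.imI * b.imJ - a.imJ * b.imI = 0 := by
  have h1 := congrArg QuaternionAlgebra.imI h
  have h2 := congrArg QuaternionAlgebra.imJ h
  have h3 := congrArg QuaternionAlgebra.imK h
  rw [Quaternion.imI_mul, Quaternion.imI_mul] at h1
  rw [Quaternion.imJ_mul, Quaternion.imJ_mul] at h2
  rw [Quaternion.imK_mul, Quaternion.imK_mul] at h3
  refine ⟨by linarith, by linarith, by linarith⟩

lemma norm_one_of_normSq_one (x : ℍ[ℝ]) (h : Quaternion.normSq x = 1) : ‖x‖ = 1 := by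
  have h2 := Quaternion.normSq_eq_norm_mul_self x
  rw [h] at h2
  rcases mul_self_eq_one_iff.mp h2.symm with h' | h'
  · exact h'
  · nlinarith [norm_nonneg x]

/-- Main auxiliary lemma: if `a` has nonzero imaginary part and the imaginary parts of
`b`, `c`, `d` are parallel to it, we can find the desired `x`. -/
lemma aux_main (a b c d : ℍ[ℝ])
    (hv : ¬(a.imI = 0 ∧ a.imJ = 0 ∧ a.imK = 0))
    (cb : b.imJ * a.imK - b.imK * a.imJ = 0 ∧ b.imK * a.imI - b.imI * a.imK = 0 ∧
      b.imI * a.imJ - b.imJ * a.imI = 0)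
    (cc : c.imJ * a.imK - c.imK * a.imJ = 0 ∧ c.imK * a.imI - c.imI * a.imK = 0 ∧
      c.imI * a.imJ - c.imJ * a.imI = 0)
    (cd : d.imJ * a.imK - d.imK * a.imJ = 0 ∧ d.imK * a.imI - d.imI * a.imK = 0 ∧
      d.imI * a.imJ - d.imJ * a.imI = 0) :
    ∃ x : ℍ[ℝ], x.re = 0 ∧ ‖x‖ = 1 ∧ (x * a).re = 0 ∧ (x * b).re = 0 ∧
      (x * c).re = 0 ∧ (x * d).re = 0 := by
  obtain ⟨x1, x2, x3, hnorm, hperp⟩ := exists_perp_unit a.imI a.imJ a.imK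
  refine ⟨⟨0, x1, x2, x3⟩, rfl, ?_, ?_, ?_, ?_, ?_⟩
  · apply norm_one_of_normSq_one
    erw [Quaternion.normSq_def']
    simpa using hnorm
  all_goals erw [Quaternion.re_mul]
  · show (0 : ℝ) * a.re - x1 * a.imI - x2 * a.imJ - x3 * a.imK = 0
    linarith [hperp]
  · have key := perp_of_cross a.imI a.imJ a.imK b.imI b.imJ b.imK x1 x2 x3 hv
      (by linarith [hperp]) (by linarith [cb.1]) (by linarith [cb.2.1]) (by linarith [cb.2.2])
    show (0 : ℝ) * b.re - x1 * b.imI - x2 * b.imJ - x3 * b.imK = 0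
    linarith [key]
  · have key := perp_of_cross a.imI a.imJ a.imK c.imI c.imJ c.imK x1 x2 x3 hv
      (by linarith [hperp]) (by linarith [cc.1]) (by linarith [cc.2.1]) (by linarith [cc.2.2])
    show (0 : ℝ) * c.re - x1 * c.imI - x2 * c.imJ - x3 * c.imK = 0
    linarith [key]
  · have key := perp_of_cross a.imI a.imJ a.imK d.imI d.imJ d.imK x1 x2 x3 hv
      (by linarith [hperp]) (by linarith [cd.1]) (by linarith [cd.2.1]) (by linarith [cd.2.2])
    show (0 : ℝ) * d.re - x1 * d.imI - x2 * d.imJ - x3 * d.imK = 0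
    linarith [key]

/-- If four unit quaternions pairwise commute, then there is a purely imaginary unit
quaternion `x` with `Re(xa) = Re(xb) = Re(xc) = Re(xd) = 0`. -/
theorem exists_perp_of_pairwise_commute (a b c d : ℍ[ℝ])
    (ha : ‖a‖ = 1) (hb : ‖b‖ = 1) (hc : ‖c‖ = 1) (hd : ‖d‖ = 1)
    (hab : a * b = b * a) (hac : a * c = c * a) (had : a * d = d * a)
    (hbc : b * c = c * b) (hbd : b * d = d * b) (hcd : c * d = d * c) :
    ∃ x : ℍ[ℝ], x.re = 0 ∧ ‖x‖ = 1 ∧ (x * a).re = 0 ∧ (x * b).re = 0 ∧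
      (x * c).re = 0 ∧ (x * d).re = 0 := by
  have cab := cross_of_comm a b hab
  have cac := cross_of_comm a c hac
  have cad := cross_of_comm a d had
  have cbc := cross_of_comm b c hbc
  have cbd := cross_of_comm b d hbd
  have ccd := cross_of_comm c d hcd
  by_cases hA : a.imI = 0 ∧ a.imJ = 0 ∧ a.imK = 0
  · by_cases hB : b.imI = 0 ∧ b.imJ = 0 ∧ b.imK = 0
    · by_cases hC : c.imI = 0 ∧ c.imJ = 0 ∧ c.imK = 0
      · by_cases hD : d.imI = 0 ∧ d.imJ = 0 ∧ d.imK = 0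
        · refine ⟨⟨0, 1, 0, 0⟩, rfl, ?_, ?_, ?_, ?_, ?_⟩
          · apply norm_one_of_normSq_one
            erw [Quaternion.normSq_def']
            norm_num
          all_goals erw [Quaternion.re_mul]
          · show (0 : ℝ) * a.re - 1 * a.imI - 0 * a.imJ - 0 * a.imK = 0
            rw [hA.1]; ring
          · show (0 : ℝ) * b.re - 1 * b.imI - 0 * b.imJ - 0 * b.imK = 0
            rw [hB.1]; ring
          · show (0 : ℝ) * c.re - 1 * c.imI - 0 * c.imJ - 0 * c.imK = 0
            rw [hC.1]; ring
          · show (0 : ℝ) * d.re - 1 * d.imI - 0 * d.imJ - 0 * d.imK = 0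
            rw [hD.1]; ring
        · obtain ⟨x, h0, h1, hd', ha', hb', hc'⟩ := aux_main d a b c hD
            ⟨by linarith [cad.1], by linarith [cad.2.1], by linarith [cad.2.2]⟩
            ⟨by linarith [cbd.1], by linarith [cbd.2.1], by linarith [cbd.2.2]⟩
            ⟨by linarith [ccd.1], by linarith [ccd.2.1], by linarith [ccd.2.2]⟩
          exact ⟨x, h0, h1, ha', hb', hc', hd'⟩
      · obtain ⟨x, h0, h1, hc', ha', hb', hd'⟩ := aux_main c a b d hC
          ⟨by linarith [cac.1], by linarith [cac.2.1], by linarith [cac.2.2]⟩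
          ⟨by linarith [cbc.1], by linarith [cbc.2.1], by linarith [cbc.2.2]⟩
          ⟨by linarith [ccd.1], by linarith [ccd.2.1], by linarith [ccd.2.2]⟩
        exact ⟨x, h0, h1, ha', hb', hc', hd'⟩
    · obtain ⟨x, h0, h1, hb', ha', hc', hd'⟩ := aux_main b a c d hB
        ⟨by linarith [cab.1], by linarith [cab.2.1], by linarith [cab.2.2]⟩
        ⟨by linarith [cbc.1], by linarith [cbc.2.1], by linarith [cbc.2.2]⟩
        ⟨by linarith [cbd.1], by linarith [cbd.2.1], by linarith [cbd.2.2]⟩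
      exact ⟨x, h0, h1, ha', hb', hc', hd'⟩
  · obtain ⟨x, h0, h1, ha', hb', hc', hd'⟩ := aux_main a b c d hA
      ⟨by linarith [cab.1], by linarith [cab.2.1], by linarith [cab.2.2]⟩
      ⟨by linarith [cac.1], by linarith [cac.2.1], by linarith [cac.2.2]⟩
      ⟨by linarith [cad.1], by linarith [cad.2.1], by linarith [cad.2.2]⟩
    exact ⟨x, h0, h1, ha', hb', hc', hd'⟩
end

section
/- The set of traceless representations of the fundamental group of the 2k-punctured sphere with abelian image, up to conjugation, is finite with exactly 2^{2k-2} elements when the number of punctures is 2k ≥ 2, and is empty when the number of punctures is odd. -/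
open Quaternion

/-- Traceless abelian representations of the fundamental group of the `n`-punctured sphere:
tuples `(q₁, …, qₙ)` of pairwise commuting traceless unit quaternions with `q₁ ⋯ qₙ = 1`. -/
def TracelessAbelianRep (n : ℕ) : Type :=
  { q : Fin n → ℍ[ℝ] // (∀ i, ‖q i‖ = 1) ∧ (∀ i, (q i).re = 0) ∧
      (∀ i j, q i * q j = q j * q i) ∧ (List.ofFn q).prod = 1 }

/-- Conjugacy of representations: `q'` is obtained from `q` by conjugating by a single
unit quaternion. -/
def RepConj (n : ℕ) (q q' : TracelessAbelianRep n) : Prop :=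
  ∃ g : ℍ[ℝ], ‖g‖ = 1 ∧ ∀ i, q'.1 i = g * q.1 i * g⁻¹

namespace AbLocus

noncomputable def u0 : ℍ[ℝ] := ⟨0, 1, 0, 0⟩
noncomputable def j0 : ℍ[ℝ] := ⟨0, 0, 1, 0⟩

lemma norm_u0 : ‖u0‖ = 1 := by
  have h := Quaternion.normSq_eq_norm_mul_self u0
  have h2 : normSq u0 = 1 := by rw [Quaternion.normSq_def']; simp [u0]
  nlinarith [norm_nonneg u0]

lemma norm_j0 : ‖j0‖ = 1 := by
  have h := Quaternion.normSq_eq_norm_mul_self j0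
  have h2 : normSq j0 = 1 := by rw [Quaternion.normSq_def']; simp [j0]
  nlinarith [norm_nonneg j0]

lemma u0_re : u0.re = 0 := rfl

lemma u0_ne_neg : u0 ≠ -u0 := by
  intro h
  have := congrArg QuaternionAlgebra.imI h
  rw [Quaternion.imI_neg, show u0.imI = 1 from rfl] at this
  norm_num at this

lemma sq_pure {u : ℍ[ℝ]} (h0 : u.re = 0) (h1 : ‖u‖ = 1) : u * u = -1 := by
  have hs : star u = -u := by ext <;> simp [h0]
  have hn : normSq u = 1 := by
    rw [Quaternion.normSq_eq_norm_mul_self, h1]; ring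
  have h3 : u * star u = (normSq u : ℝ) := Quaternion.self_mul_star u
  rw [hs, mul_neg] at h3
  rw [hn] at h3
  have := neg_eq_iff_eq_neg.mp h3
  rw [this]; push_cast; ring

lemma conj_of_eq {g x u : ℍ[ℝ]} (hg : g ≠ 0) (h : g * x = u * g) : g * x * g⁻¹ = u := by
  rw [h, mul_assoc, mul_inv_cancel₀ hg, mul_one]

lemma exists_conj {u : ℍ[ℝ]} (h0 : u.re = 0) (h1 : ‖u‖ = 1) :
    ∃ g : ℍ[ℝ], ‖g‖ = 1 ∧ g * u0 * g⁻¹ = u := by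
  by_cases hc : u = -u0
  · refine ⟨j0, norm_j0, ?_⟩
    apply conj_of_eq (by rw [← norm_ne_zero_iff, norm_j0]; norm_num)
    subst hc
    ext <;> simp only [Quaternion.re_mul, Quaternion.imI_mul, Quaternion.imJ_mul,
      Quaternion.imK_mul, Quaternion.re_neg, Quaternion.imI_neg, Quaternion.imJ_neg,
      Quaternion.imK_neg] <;> simp [u0, j0]
  · have hne : u + u0 ≠ 0 := fun h => hc (eq_neg_of_add_eq_zero_left h)
    have hnorm : ‖u + u0‖ ≠ 0 := norm_ne_zero_iff.mpr hne
    set c : ℝ := ‖u + u0‖⁻¹ with hcdef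
    have hgne : ((c : ℍ[ℝ])) * (u + u0) ≠ 0 :=
      mul_ne_zero (by rw [Ne, ← Quaternion.coe_zero, Quaternion.coe_inj]
                      exact inv_ne_zero hnorm) hne
    refine ⟨(c : ℍ[ℝ]) * (u + u0), ?_, ?_⟩
    · rw [norm_mul, Quaternion.norm_coe, hcdef, Real.norm_eq_abs, abs_inv, abs_norm]
      exact inv_mul_cancel₀ hnorm
    · apply conj_of_eq hgne
      have key : (u + u0) * u0 = u * (u + u0) := by
        rw [add_mul, mul_add, sq_pure u0_re norm_u0, sq_pure h0 h1]
        abel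
      calc (c : ℍ[ℝ]) * (u + u0) * u0 = (c : ℍ[ℝ]) * ((u + u0) * u0) := mul_assoc _ _ _
        _ = (c : ℍ[ℝ]) * (u * (u + u0)) := by rw [key]
        _ = ((c : ℍ[ℝ]) * u) * (u + u0) := (mul_assoc _ _ _).symm
        _ = (u * (c : ℍ[ℝ])) * (u + u0) := by rw [Quaternion.coe_commutes]
        _ = u * ((c : ℍ[ℝ]) * (u + u0)) := mul_assoc _ _ _

lemma norm_comp {u : ℍ[ℝ]} (h0 : u.re = 0) (h1 : ‖u‖ = 1) :
    u.imI^2 + u.imJ^2 + u.imK^2 = 1 := by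
  have h := Quaternion.normSq_eq_norm_mul_self u
  rw [h1, Quaternion.normSq_def', h0] at h
  nlinarith

lemma aux_real (a b c x y z : ℝ) (hp : a^2+b^2+c^2 = 1) (hq : x^2+y^2+z^2 = 1)
    (f1 : b*z = c*y) (f2 : c*x = a*z) (f3 : a*y = b*x) :
    (x = a ∧ y = b ∧ z = c) ∨ (x = -a ∧ y = -b ∧ z = -c) := by
  have hx : x = (a*x+b*y+c*z)*a := by linear_combination (-x)*hp + (-b)*f3 + c*f2
  have hy : y = (a*x+b*y+c*z)*b := by linear_combination (-y)*hp + a*f3 + (-c)*f1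
  have hz : z = (a*x+b*y+c*z)*c := by linear_combination (-z)*hp + (-a)*f2 + b*f1
  have hq' : ((a*x+b*y+c*z)*a)^2 + ((a*x+b*y+c*z)*b)^2 + ((a*x+b*y+c*z)*c)^2 = 1 := by
    rw [← hx, ← hy, ← hz]; exact hq
  have hd2 : ((a*x+b*y+c*z) - 1) * ((a*x+b*y+c*z) + 1) = 0 := by
    linear_combination hq' - ((a*x+b*y+c*z)^2)*hp
  rcases mul_eq_zero.mp hd2 with h1 | h1
  · left
    refine ⟨?_, ?_, ?_⟩ <;> [linear_combination hx + a*h1; linear_combination hy + b*h1;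
      linear_combination hz + c*h1]
  · right
    refine ⟨?_, ?_, ?_⟩ <;> [linear_combination hx + a*h1; linear_combination hy + b*h1;
      linear_combination hz + c*h1]

lemma pure_commute_cases {p q : ℍ[ℝ]} (hp0 : p.re = 0) (hq0 : q.re = 0)
    (hp1 : ‖p‖ = 1) (hq1 : ‖q‖ = 1) (h : p * q = q * p) : q = p ∨ q = -p := by
  have e1 := congrArg QuaternionAlgebra.imI h
  have e2 := congrArg QuaternionAlgebra.imJ h
  have e3 := congrArg QuaternionAlgebra.imK h
  simp only [Quaternion.imI_mul, Quaternion.imJ_mul, Quaternion.imK_mul, hp0, hq0,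
    zero_mul, mul_zero, zero_add, add_zero, zero_sub, sub_zero] at e1 e2 e3
  have f1 : p.imJ * q.imK = p.imK * q.imJ := by linear_combination e1/2
  have f2 : p.imK * q.imI = p.imI * q.imK := by linear_combination e2/2
  have f3 : p.imI * q.imJ = p.imJ * q.imI := by linear_combination e3/2
  rcases aux_real p.imI p.imJ p.imK q.imI q.imJ q.imK (norm_comp hp0 hp1)
      (norm_comp hq0 hq1) f1 f2 f3 with ⟨h1, h2, h3⟩ | ⟨h1, h2, h3⟩
  · left; ext <;> simp [hp0, hq0, h1, h2, h3]
  · right; ext <;> simp [hp0, hq0, h1, h2, h3]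

lemma coe_shift (r : ℝ) (x y : ℍ[ℝ]) :
    x * ((r : ℍ[ℝ]) * y) = (r : ℍ[ℝ]) * (x * y) := by
  rw [← mul_assoc, ← Quaternion.coe_commutes, mul_assoc]

lemma conj_list_prod (g : ℍ[ℝ]) (hg : g ≠ 0) : ∀ l : List ℍ[ℝ],
    (l.map fun x => g * x * g⁻¹).prod = g * l.prod * g⁻¹
  | [] => by simp [mul_inv_cancel₀ hg]
  | a :: l => by
    rw [List.map_cons, List.prod_cons, conj_list_prod g hg l, List.prod_cons]
    have h1 : g⁻¹ * (g * l.prod * g⁻¹) = l.prod * g⁻¹ := by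
      rw [← mul_assoc, ← mul_assoc, inv_mul_cancel₀ hg, one_mul]
    calc g * a * g⁻¹ * (g * l.prod * g⁻¹) = g * a * (g⁻¹ * (g * l.prod * g⁻¹)) := by
          rw [mul_assoc]
      _ = g * a * (l.prod * g⁻¹) := by rw [h1]
      _ = g * (a * l.prod) * g⁻¹ := by rw [mul_assoc g a, ← mul_assoc a, ← mul_assoc, ← mul_assoc]

lemma prod_scalar_mul (u : ℍ[ℝ]) : ∀ (n : ℕ) (ε : Fin n → ℝ),
    (List.ofFn fun m => (ε m : ℍ[ℝ]) * u).prod = ((∏ m, ε m : ℝ) : ℍ[ℝ]) * u ^ n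
  | 0, ε => by simp
  | n + 1, ε => by
    rw [List.ofFn_succ, List.prod_cons]
    rw [show (List.ofFn fun i : Fin n => (ε i.succ : ℍ[ℝ]) * u) =
      (List.ofFn fun i : Fin n => ((ε ∘ Fin.succ) i : ℍ[ℝ]) * u) from rfl]
    rw [prod_scalar_mul u n (ε ∘ Fin.succ), Fin.prod_univ_succ, pow_succ']
    push_cast
    rw [mul_assoc ((ε 0 : ℍ[ℝ])), coe_shift, ← mul_assoc]; rfl

lemma last_entry_eq {n : ℕ} (q q' : Fin (n + 1) → ℍ[ℝ])
    (hq : (List.ofFn q).prod = 1) (hq' : (List.ofFn q').prod = 1)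
    (hfront : ∀ j : Fin n, q j.castSucc = q' j.castSucc)
    (hne : ∀ j : Fin (n + 1), q j ≠ 0) :
    q (Fin.last n) = q' (Fin.last n) := by
  rw [List.ofFn_succ', List.prod_concat] at hq hq'
  have he : (List.ofFn fun j : Fin n => q j.castSucc)
      = List.ofFn fun j : Fin n => q' j.castSucc := by
    congr 1; exact funext hfront
  rw [← he] at hq'
  have hpne : (List.ofFn fun j : Fin n => q j.castSucc).prod ≠ 0 := by
    apply List.prod_ne_zero
    intro h0
    rw [List.mem_ofFn] at h0
    obtain ⟨j, hj⟩ := h0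
    exact hne _ hj
  exact mul_left_cancel₀ hpne (hq.trans hq'.symm)

lemma prod_split {M : Type*} [CommMonoid M] (n : ℕ) (h2 : 2 ≤ n) (f : Fin n → M) :
    ∏ x, f x = f ⟨0, by omega⟩ *
      (∏ j : Fin (n - 2), f ⟨j.1 + 1, by omega⟩) * f ⟨n - 1, by omega⟩ := by
  obtain ⟨m, rfl⟩ : ∃ m, n = m + 2 := ⟨n - 2, by omega⟩
  rw [Fin.prod_univ_succ, Fin.prod_univ_castSucc, ← mul_assoc]
  rfl

/-! ### signs -/

noncomputable def sg (b : Bool) : ℝ := if b then 1 else -1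

lemma sg_cases (b : Bool) : sg b = 1 ∨ sg b = -1 := by
  cases b <;> simp [sg]

lemma sg_true : sg true = 1 := by simp [sg]

lemma sg_false : sg false = -1 := by simp [sg]

lemma pm_prod {ι : Type*} (s : Finset ι) (f : ι → ℝ) (h : ∀ i ∈ s, f i = 1 ∨ f i = -1) :
    s.prod f = 1 ∨ s.prod f = -1 := by
  classical
  induction s using Finset.induction_on with
  | empty => simp
  | insert _ _ hnotmem ih =>
    rename_i a s'
    rw [Finset.prod_insert hnotmem]
    rcases h a (Finset.mem_insert_self a s') with h1 | h1 <;>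
      rcases ih (fun i hi => h i (Finset.mem_insert_of_mem hi)) with h2 | h2 <;>
        simp [h1, h2]

/-! ### The maps -/

open scoped Classical in
noncomputable def Fmap (n : ℕ) (h2 : 2 ≤ n) (q : TracelessAbelianRep n) : Fin (n - 2) → Bool :=
  fun j => decide (q.1 ⟨j.1 + 1, by omega⟩ = q.1 ⟨0, by omega⟩)

noncomputable def eps (n m : ℕ) (h2 : 2 ≤ n) (b : Fin (n - 2) → Bool) : Fin n → ℝ :=
  fun x =>
    if h0 : x.1 = 0 then 1
    else if h1 : x.1 < n - 1 then sg (b ⟨x.1 - 1, by omega⟩)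
    else (-1 : ℝ) ^ m * ∏ j, sg (b j)

lemma eps_zero (n m : ℕ) (h2 : 2 ≤ n) (b : Fin (n - 2) → Bool) :
    eps n m h2 b ⟨0, by omega⟩ = 1 := by simp [eps]

lemma eps_mid' (n m : ℕ) (h2 : 2 ≤ n) (b : Fin (n - 2) → Bool) (x : Fin n)
    (hx0 : x.1 ≠ 0) (hx1 : x.1 < n - 1) :
    eps n m h2 b x = sg (b ⟨x.1 - 1, by omega⟩) := by
  simp only [eps]
  rw [dif_neg hx0, dif_pos hx1]

lemma eps_mid (n m : ℕ) (h2 : 2 ≤ n) (b : Fin (n - 2) → Bool) (j : Fin (n - 2)) :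
    eps n m h2 b ⟨j.1 + 1, by omega⟩ = sg (b j) := by
  have hj := j.2
  rw [eps_mid' n m h2 b _ (by simp) (by simp; omega)]
  have he : (⟨j.1 + 1 - 1, by omega⟩ : Fin (n - 2)) = j := Fin.ext (by simp)
  rw [he]

lemma eps_last' (n m : ℕ) (h2 : 2 ≤ n) (b : Fin (n - 2) → Bool) (x : Fin n)
    (hx0 : x.1 ≠ 0) (hx1 : ¬ x.1 < n - 1) :
    eps n m h2 b x = (-1 : ℝ) ^ m * ∏ j, sg (b j) := by
  simp only [eps]
  rw [dif_neg hx0, dif_neg hx1]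

lemma eps_last (n m : ℕ) (h2 : 2 ≤ n) (b : Fin (n - 2) → Bool) :
    eps n m h2 b ⟨n - 1, by omega⟩ = (-1 : ℝ) ^ m * ∏ j, sg (b j) := by
  rw [eps_last' n m h2 b _ (by simp; omega) (by simp)]

lemma eps_pm (n m : ℕ) (h2 : 2 ≤ n) (b : Fin (n - 2) → Bool) (x : Fin n) :
    eps n m h2 b x = 1 ∨ eps n m h2 b x = -1 := by
  rw [eps]
  split
  · left; rfl
  split
  · apply sg_cases
  · rcases pm_prod Finset.univ (fun j => sg (b j)) (fun i _ => sg_cases (b i)) with h | h <;>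
      rcases Nat.even_or_odd m with hm | hm <;>
        simp [h, hm.neg_one_pow]

lemma eps_prod (n m : ℕ) (hn : n = 2 * m) (h2 : 2 ≤ n) (b : Fin (n - 2) → Bool) :
    ∏ x, eps n m h2 b x = (-1 : ℝ) ^ m := by
  rw [prod_split n h2, eps_zero, eps_last, one_mul]
  have hmid : (∏ j : Fin (n - 2), eps n m h2 b ⟨j.1 + 1, by omega⟩) = ∏ j, sg (b j) :=
    Finset.prod_congr rfl fun j _ => eps_mid n m h2 b j
  rw [hmid]
  have hsq : (∏ j, sg (b j)) * (∏ j, sg (b j)) = 1 := by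
    rcases pm_prod Finset.univ (fun j => sg (b j)) (fun i _ => sg_cases (b i)) with h | h <;>
      rw [h] <;> norm_num
  calc (∏ j, sg (b j)) * ((-1 : ℝ) ^ m * ∏ j, sg (b j))
      = (-1 : ℝ) ^ m * ((∏ j, sg (b j)) * (∏ j, sg (b j))) := by ring
    _ = (-1 : ℝ) ^ m := by rw [hsq, mul_one]

lemma scalar_comm (a b : ℝ) (u : ℍ[ℝ]) :
    ((a : ℍ[ℝ]) * u) * ((b : ℍ[ℝ]) * u) = ((b : ℍ[ℝ]) * u) * ((a : ℍ[ℝ]) * u) := by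
  rw [mul_assoc, coe_shift, ← mul_assoc, ← Quaternion.coe_mul]
  conv_rhs => rw [mul_assoc, coe_shift, ← mul_assoc, ← Quaternion.coe_mul]
  rw [mul_comm a b]

noncomputable def Gmap (n m : ℕ) (hn : n = 2 * m) (h2 : 2 ≤ n) (b : Fin (n - 2) → Bool) :
    TracelessAbelianRep n := by
  refine ⟨fun x => ((eps n m h2 b x : ℝ) : ℍ[ℝ]) * u0, ?_, ?_, ?_, ?_⟩
  · intro i
    dsimp only
    rcases eps_pm n m h2 b i with h | h <;>
      rw [h] <;> simp [norm_mul, Quaternion.norm_coe, norm_u0]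
  · intro i
    dsimp only
    rw [Quaternion.re_mul]; simp [u0]
  · intro i j
    dsimp only
    exact scalar_comm _ _ _
  · rw [prod_scalar_mul u0 n (eps n m h2 b), eps_prod n m hn h2 b, hn, pow_mul,
      sq, sq_pure u0_re norm_u0]
    push_cast
    rw [← (Commute.refl (-1 : ℍ[ℝ])).mul_pow m]
    norm_num

lemma coe_one_mul (x : ℍ[ℝ]) : ((1 : ℝ) : ℍ[ℝ]) * x = x := by
  rw [Quaternion.coe_one, one_mul]

lemma coe_neg_one_mul (x : ℍ[ℝ]) : ((-1 : ℝ) : ℍ[ℝ]) * x = -x := by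
  push_cast
  rw [neg_one_mul]

lemma FG (n m : ℕ) (hn : n = 2 * m) (h2 : 2 ≤ n) (b : Fin (n - 2) → Bool) :
    Fmap n h2 (Gmap n m hn h2 b) = b := by
  classical
  funext j
  have hj := j.2
  have h1 : (Gmap n m hn h2 b).1 ⟨j.1 + 1, by omega⟩
      = ((sg (b j) : ℝ) : ℍ[ℝ]) * u0 := by
    show ((eps n m h2 b ⟨j.1 + 1, by omega⟩ : ℝ) : ℍ[ℝ]) * u0 = _
    rw [eps_mid]
  have h0 : (Gmap n m hn h2 b).1 ⟨0, by omega⟩ = u0 := by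
    show ((eps n m h2 b ⟨0, by omega⟩ : ℝ) : ℍ[ℝ]) * u0 = _
    rw [eps_zero, coe_one_mul]
  rw [Fmap]
  cases hb : b j
  · apply decide_eq_false
    rw [h1, h0, hb, sg_false, coe_neg_one_mul]
    intro hcon
    exact u0_ne_neg hcon.symm
  · apply decide_eq_true
    rw [h1, h0, hb, sg_true, coe_one_mul]

lemma GF (n m : ℕ) (hn : n = 2 * m) (h2 : 2 ≤ n) (q : TracelessAbelianRep n) :
    RepConj n (Gmap n m hn h2 (Fmap n h2 q)) q := by
  classical
  obtain ⟨hnorm, hre, hcomm, hprod⟩ := q.2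
  set u : ℍ[ℝ] := q.1 ⟨0, by omega⟩ with hu
  obtain ⟨g, hg1, hgc⟩ := exists_conj (hre ⟨0, by omega⟩) (hnorm ⟨0, by omega⟩)
  have hgne : g ≠ 0 := by intro h; rw [h, norm_zero] at hg1; norm_num at hg1
  set s := Gmap n m hn h2 (Fmap n h2 q) with hs
  refine ⟨g, hg1, ?_⟩
  have hclass : ∀ i : Fin n, q.1 i = u ∨ q.1 i = -u := fun i =>
    pure_commute_cases (hre _) (hre i) (hnorm _) (hnorm i) (hcomm _ i)
  have hfront : ∀ i : Fin n, i.1 < n - 1 → q.1 i = g * s.1 i * g⁻¹ := by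
    intro i hi
    have hsi : s.1 i = ((eps n m h2 (Fmap n h2 q) i : ℝ) : ℍ[ℝ]) * u0 := rfl
    by_cases h0 : i.1 = 0
    · have hi0 : i = ⟨0, by omega⟩ := Fin.ext h0
      have heps0 : eps n m h2 (Fmap n h2 q) i = 1 := by
        rw [hi0]; exact eps_zero n m h2 _
      rw [hsi, heps0, coe_one_mul, hgc]
      exact congrArg q.1 hi0
    · have heps : eps n m h2 (Fmap n h2 q) i
          = sg (Fmap n h2 q ⟨i.1 - 1, by omega⟩) := eps_mid' n m h2 _ i h0 hi
      have hidx : (⟨(i.1 - 1) + 1, by omega⟩ : Fin n) = i := Fin.ext (by simp; omega)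
      have hFval : Fmap n h2 q ⟨i.1 - 1, by omega⟩ = decide (q.1 i = u) := by
        rw [Fmap, hidx, hu]
      by_cases hqi : q.1 i = u
      · rw [hsi, heps, hFval, decide_eq_true hqi, sg_true, coe_one_mul, hgc]
        exact hqi
      · have hqneg : q.1 i = -u := (hclass i).resolve_left hqi
        rw [hsi, heps, hFval, decide_eq_false hqi, sg_false, coe_neg_one_mul, mul_neg,
          neg_mul, hgc]
        exact hqneg
  intro i
  by_cases hi : i.1 < n - 1
  · exact hfront i hi
  · obtain ⟨p, rfl⟩ : ∃ p, n = p + 1 := ⟨n - 1, by omega⟩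
    have hil : i = Fin.last p := by
      apply Fin.ext
      rw [Fin.val_last]
      have := i.2
      omega
    obtain ⟨snorm, -, -, sprod⟩ := s.2
    have key := last_entry_eq (fun x => g * s.1 x * g⁻¹) q.1 ?_ hprod ?_ ?_
    · rw [hil]; exact key.symm
    · have hmap : (List.ofFn fun x => g * s.1 x * g⁻¹)
          = (List.ofFn s.1).map (fun x => g * x * g⁻¹) := by
        rw [List.map_ofFn]; rfl
      rw [hmap, conj_list_prod g hgne, sprod, mul_one, mul_inv_cancel₀ hgne]
    · intro j
      exact (hfront j.castSucc (by rw [Fin.coe_castSucc]; have := j.2; omega)).symm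
    · intro j
      have hs1 : ‖s.1 j‖ = 1 := snorm j
      have : s.1 j ≠ 0 := by intro h; rw [h, norm_zero] at hs1; norm_num at hs1
      exact mul_ne_zero (mul_ne_zero hgne this) (inv_ne_zero hgne)

lemma F_conj (n : ℕ) (h2 : 2 ≤ n) (q q' : TracelessAbelianRep n) (h : RepConj n q q') :
    Fmap n h2 q = Fmap n h2 q' := by
  classical
  obtain ⟨g, hg1, hgc⟩ := h
  have hgne : g ≠ 0 := by intro h; rw [h, norm_zero] at hg1; norm_num at hg1
  funext j
  rw [Fmap, Fmap]
  rw [decide_eq_decide]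
  rw [hgc, hgc]
  constructor
  · intro h
    rw [h]
  · intro h
    have h1 := mul_right_cancel₀ (inv_ne_zero hgne) h
    have h2 := mul_left_cancel₀ hgne h1
    rw [h2]

noncomputable def mainEquiv (n m : ℕ) (hn : n = 2 * m) (h2 : 2 ≤ n) :
    Quot (RepConj n) ≃ (Fin (n - 2) → Bool) where
  toFun := Quot.lift (Fmap n h2) (fun q q' h => F_conj n h2 q q' h)
  invFun := fun b => Quot.mk _ (Gmap n m hn h2 b)
  left_inv := by
    apply Quot.ind
    intro q
    exact Quot.sound (GF n m hn h2 q)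
  right_inv := fun b => FG n m hn h2 b

end AbLocus

open AbLocus in
/-- The set of traceless representations with abelian image, up to conjugation, is finite
with exactly `2^(2k-2)` elements when the number of punctures is `2k ≥ 2`, and is empty
when the number of punctures is odd. -/
theorem abelian_locus_card :
    (∀ k : ℕ, 1 ≤ k →
      Finite (Quot (RepConj (2 * k))) ∧
      Nat.card (Quot (RepConj (2 * k))) = 2 ^ (2 * k - 2)) ∧
    (∀ n : ℕ, Odd n → IsEmpty (TracelessAbelianRep n)) := by
  constructor
  · intro k hk
    have h2 : 2 ≤ 2 * k := by omega
    have e := mainEquiv (2 * k) k rfl h2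
    refine ⟨Finite.of_equiv _ e.symm, ?_⟩
    rw [Nat.card_congr e, ← @Fintype.card_eq_nat_card _ (by infer_instance)]
    simp
  · intro n hodd
    obtain ⟨m, hm⟩ := hodd
    constructor
    intro q
    classical
    obtain ⟨hnorm, hre, hcomm, hprod⟩ := q.2
    have hpos : 0 < n := by omega
    set u : ℍ[ℝ] := q.1 ⟨0, hpos⟩ with hu
    have hclass : ∀ i : Fin n, q.1 i = u ∨ q.1 i = -u := fun i =>
      pure_commute_cases (hre _) (hre i) (hnorm _) (hnorm i) (hcomm _ i)
    set ε : Fin n → ℝ := fun i => if q.1 i = u then 1 else -1 with hε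
    have hqi : ∀ i, q.1 i = ((ε i : ℝ) : ℍ[ℝ]) * u := by
      intro i
      by_cases h : q.1 i = u
      · simp only [hε, if_pos h, coe_one_mul]; exact h
      · simp only [hε, if_neg h, coe_neg_one_mul]
        exact (hclass i).resolve_left h
    have hprod2 : (List.ofFn q.1).prod = ((∏ i, ε i : ℝ) : ℍ[ℝ]) * u ^ n := by
      rw [show List.ofFn q.1 = List.ofFn fun i => ((ε i : ℝ) : ℍ[ℝ]) * u from
        congrArg _ (funext hqi)]
      exact prod_scalar_mul u n ε
    have hun : u ^ n = ((-1 : ℝ) ^ m : ℝ) * u := by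
      rw [hm, pow_succ, pow_mul, sq, sq_pure (hre _) (hnorm _)]
      push_cast
      ring_nf
    rw [hprod, hun, ← mul_assoc, ← Quaternion.coe_mul] at hprod2
    have hure : u.re = 0 := hre _
    have hre1 := congrArg QuaternionAlgebra.re hprod2
    simp only [Quaternion.re_one, Quaternion.re_mul, Quaternion.re_coe, Quaternion.imI_coe,
      Quaternion.imJ_coe, Quaternion.imK_coe, hure] at hre1
    revert hre1
    norm_num
end

section
/- The map h: ℂ⁴ → ℝ given by h(z₁,z₂,z₃,z₄) = Re(i e^{-z₁j} e^{z₂j} e^{-z₃j} e^{z₄j}) satisfies h(z̄₁,z̄₂,z̄₃,z̄₄) = -h(z₁,z₂,z₃,z₄); in particular complex conjugation in each coordinate preserves h⁻¹(0). -/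
open Quaternion

/-- The quaternion unit `j`. -/
def qj : ℍ[ℝ] := ⟨0, 0, 1, 0⟩

/-- The quaternion unit `k`. -/
def qk : ℍ[ℝ] := ⟨0, 0, 0, 1⟩

/-- For a complex number `z = x + yi`, the quaternionic exponential `e^{zj} = e^{xj + yk}`. -/
noncomputable def expZJ (z : ℂ) : ℍ[ℝ] := NormedSpace.exp (z.re • qj + z.im • qk)

/-- The map `h(z₁,z₂,z₃,z₄) = Re(i e^{-z₁j} e^{z₂j} e^{-z₃j} e^{z₄j})`. -/
noncomputable def hMap (z₁ z₂ z₃ z₄ : ℂ) : ℝ :=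
  (qi * expZJ (-z₁) * expZJ z₂ * expZJ (-z₃) * expZJ z₄).re

lemma qj_ne_zero : qj ≠ 0 := by
  intro h
  have := congrArg QuaternionAlgebra.imJ h
  simp [qj] at this

lemma qj_mul_neg_qj : qj * -qj = 1 := by
  ext <;> simp [Quaternion.re_mul, Quaternion.imI_mul, Quaternion.imJ_mul,
    Quaternion.imK_mul] <;> simp [qj]

lemma qj_inv : qj⁻¹ = -qj :=
  inv_eq_of_mul_eq_one_right qj_mul_neg_qj

lemma expZJ_conj (z : ℂ) : expZJ (starRingEnd ℂ z) = qj * expZJ z * qj⁻¹ := by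
  letI : NormedAlgebra ℚ ℍ[ℝ] :=
    { norm_smul_le := fun q x => by
        rw [← Rat.cast_smul_eq_qsmul ℝ q x, norm_smul, Rat.norm_cast_real] }
  unfold expZJ
  rw [← NormedSpace.exp_conj qj _ qj_ne_zero]
  congr 1
  rw [qj_inv]
  ext <;>
    simp [Quaternion.re_mul, Quaternion.imI_mul, Quaternion.imJ_mul,
      Quaternion.imK_mul, Complex.conj_re, Complex.conj_im] <;> simp [qj, qk]

lemma re_mul_comm_s15 (a b : ℍ[ℝ]) : (a * b).re = (b * a).re := by
  simp only [Quaternion.re_mul]; ring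

lemma qj_sq : qj * qj = -1 := by
  ext <;> simp [Quaternion.re_mul, Quaternion.imI_mul, Quaternion.imJ_mul,
    Quaternion.imK_mul] <;> simp [qj]

lemma negqj_cancel (y : ℍ[ℝ]) : -qj * (qj * y) = y := by
  rw [neg_mul, ← mul_assoc, qj_sq, neg_one_mul, neg_neg]

lemma negqj_qi_qj : -qj * qi * qj = -qi := by
  ext <;> simp [Quaternion.re_mul, Quaternion.imI_mul, Quaternion.imJ_mul,
    Quaternion.imK_mul] <;> simp [qj, qi]

/-- `h(z̄₁,z̄₂,z̄₃,z̄₄) = -h(z₁,z₂,z₃,z₄)`; in particular coordinatewise complex conjugation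
preserves `h⁻¹(0)`. -/
theorem hMap_conj (z₁ z₂ z₃ z₄ : ℂ) :
    hMap (starRingEnd ℂ z₁) (starRingEnd ℂ z₂) (starRingEnd ℂ z₃) (starRingEnd ℂ z₄)
      = -hMap z₁ z₂ z₃ z₄ ∧
    (hMap z₁ z₂ z₃ z₄ = 0 →
      hMap (starRingEnd ℂ z₁) (starRingEnd ℂ z₂) (starRingEnd ℂ z₃) (starRingEnd ℂ z₄) = 0) := by
  have main : hMap (starRingEnd ℂ z₁) (starRingEnd ℂ z₂) (starRingEnd ℂ z₃)
      (starRingEnd ℂ z₄) = -hMap z₁ z₂ z₃ z₄ := by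
    unfold hMap
    rw [show -starRingEnd ℂ z₁ = starRingEnd ℂ (-z₁) by rw [map_neg],
        show -starRingEnd ℂ z₃ = starRingEnd ℂ (-z₃) by rw [map_neg],
        expZJ_conj, expZJ_conj, expZJ_conj, expZJ_conj]
    simp only [qj_inv]
    generalize expZJ (-z₁) = a
    generalize expZJ z₂ = b
    generalize expZJ (-z₃) = c
    generalize expZJ z₄ = d
    simp only [mul_assoc, negqj_cancel]
    rw [show qi * (qj * (a * (b * (c * (d * -qj)))))
        = (qi * (qj * (a * (b * (c * d))))) * -qj by simp only [mul_assoc]]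
    rw [re_mul_comm_s15]
    rw [show -qj * (qi * (qj * (a * (b * (c * d)))))
        = (-qj * qi * qj) * (a * (b * (c * d))) by simp only [mul_assoc]]
    rw [negqj_qi_qj, neg_mul, Quaternion.re_neg]
  exact ⟨main, fun h => by rw [main, h, neg_zero]⟩
end

section
/- The (2m-2)×(2m-2) integer matrix A with A_{ii} = 0, A_{ij} = (-1)^{i+j+1} for i > j, and A_{ij} = (-1)^{i+j} for i < j, has odd determinant² (i.e., det(A²) is odd) and is therefore invertible over ℚ. -/
/-- The `(2m-2) × (2m-2)` integer matrix `A` with `A_{ii} = 0`, `A_{ij} = (-1)^{i+j+1}` for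
`i > j` and `A_{ij} = (-1)^{i+j}` for `i < j` has `det(A²)` odd, and hence is invertible
over `ℚ`. -/
theorem hessian_block_invertible (m : ℕ) (hm : 2 ≤ m)
    (A : Matrix (Fin (2 * m - 2)) (Fin (2 * m - 2)) ℤ)
    (hA : ∀ i j : Fin (2 * m - 2), A i j =
      if i = j then 0
      else if (j : ℕ) < (i : ℕ) then (-1) ^ ((i : ℕ) + (j : ℕ) + 1)
      else (-1) ^ ((i : ℕ) + (j : ℕ))) :
    Odd (A * A).det ∧ IsUnit (A.map (fun x => (x : ℚ))) := by
  have hmap : A.map (Int.cast : ℤ → ZMod 2)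
      = 1 + Matrix.replicateCol (Fin 1) (fun _ : Fin (2 * m - 2) => (1 : ZMod 2))
          * Matrix.replicateRow (Fin 1) (fun _ : Fin (2 * m - 2) => (1 : ZMod 2)) := by
    ext i j
    have hneg : (-1 : ZMod 2) = 1 := rfl
    simp only [Matrix.map_apply, hA, Matrix.add_apply, Matrix.mul_apply,
      Matrix.replicateCol_apply, Matrix.replicateRow_apply]
    by_cases h : i = j
    · subst h; simp [Matrix.one_apply_eq]; decide
    · rw [Matrix.one_apply_ne h]
      split_ifs <;> simp [hneg]
  have hdet2 : ((A.det : ZMod 2)) = 1 := by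
    have h := (Int.castRingHom (ZMod 2)).map_det A
    rw [RingHom.mapMatrix_apply] at h
    rw [show ((A.det : ZMod 2)) = ((Int.castRingHom (ZMod 2)) A.det) from rfl, h,
      show A.map (Int.castRingHom (ZMod 2)) = A.map (Int.cast : ℤ → ZMod 2) from rfl,
      hmap]
    erw [Matrix.det_one_add_replicateCol_mul_replicateRow (ι := Fin 1)]
    have : dotProduct (fun _ : Fin (2 * m - 2) => (1 : ZMod 2)) (fun _ => (1 : ZMod 2))
        = ((2 * m - 2 : ℕ) : ZMod 2) := by
      simp [dotProduct]
    rw [this]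
    have h2 : 2 * m - 2 = 2 * (m - 1) := by omega
    rw [h2]
    have hz : (((2 * (m - 1) : ℕ)) : ZMod 2) = 0 :=
      (ZMod.natCast_eq_zero_iff _ _).mpr ⟨m - 1, rfl⟩
    rw [hz, add_zero]
  have hodd : Odd A.det := by
    rw [← Int.not_even_iff_odd]
    intro hev
    have hdvd : ((2 : ℕ) : ℤ) ∣ A.det := by exact_mod_cast hev.two_dvd
    rw [← ZMod.intCast_zmod_eq_zero_iff_dvd, hdet2] at hdvd
    exact one_ne_zero hdvd
  refine ⟨by rw [Matrix.det_mul]; exact hodd.mul hodd, ?_⟩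
  rw [Matrix.isUnit_iff_isUnit_det]
  have : (A.map (fun x => (x : ℚ))).det = ((A.det : ℚ)) :=
    ((Int.castRingHom ℚ).map_det A).symm
  rw [this, isUnit_iff_ne_zero]
  have hne : A.det ≠ 0 := fun h => by rw [h] at hodd; exact (Int.not_odd_iff_even.mpr Even.zero) hodd
  exact_mod_cast hne
end
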